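/- Let α : [0,5]_ℤ → ℤ³ be a simple 26-loop with b_i = α(i) for 0 ≤ i ≤ 4 and B = {b₀, b₁, b₂, b₃, b₄} ⊆ ℤ³ with 26-adjacency, let ℤ have 2-adjacency, and define p : ℤ → B by p(i) = b_{i mod 5}. Then p is a (2,26)-covering map, but p is not a radius 2 local isomorphism (for instance, the inverse of p restricted to N₂(0,2) = [−2,2]_ℤ maps the 26-adjacent points b₂ and b₃ to the points 2 and −2, which are not 2-adjacent). (Example 4.6) -/
import Mathlib


open Set

/-- 2-adjacency on `ℤ` (the `l₁`-adjacency on `ℤ`): `x` and `y` are distinct with `|x - y| = 1`. -/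
def adj2 (x y : ℤ) : Prop := |x - y| = 1

/-- 8-adjacency on `ℤ²` (the `l₂`-adjacency on `ℤ²`). -/
def adj8 (p q : ℤ × ℤ) : Prop := p ≠ q ∧ |p.1 - q.1| ≤ 1 ∧ |p.2 - q.2| ≤ 1

/-- 26-adjacency on `ℤ³` (the `l₃`-adjacency on `ℤ³`). -/
def adj26 (p q : ℤ × ℤ × ℤ) : Prop :=
  p ≠ q ∧ |p.1 - q.1| ≤ 1 ∧ |p.2.1 - q.2.1| ≤ 1 ∧ |p.2.2 - q.2.2| ≤ 1

/-- An adjacency relation (as any `l_u`-adjacency is) is symmetric and irreflexive. -/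
def IsAdjacency {A : Type*} (κ : A → A → Prop) : Prop := Symmetric κ ∧ Irreflexive κ

/-- `f` is `(κ,λ)`-continuous on `X`: κ-adjacent points are mapped to equal or λ-adjacent
points. -/
def DigContOn {A B : Type*} (f : A → B) (X : Set A)
    (κ : A → A → Prop) (lam : B → B → Prop) : Prop :=
  ∀ x₀ ∈ X, ∀ x₁ ∈ X, κ x₀ x₁ → f x₀ = f x₁ ∨ lam (f x₀) (f x₁)

/-- `f : [0,m]_ℤ → X` is a digital `κ`-path of length `m` in `X`,
i.e. a `(2,κ)`-continuous map on `[0,m]_ℤ` with values in `X`. -/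
def IsDigPath {A : Type*} (X : Set A) (κ : A → A → Prop) (m : ℕ) (f : ℤ → A) : Prop :=
  (∀ i ∈ Icc (0 : ℤ) (m : ℤ), f i ∈ X) ∧
  ∀ i ∈ Icc (0 : ℤ) (m : ℤ), ∀ j ∈ Icc (0 : ℤ) (m : ℤ),
    adj2 i j → f i = f j ∨ κ (f i) (f j)

/-- There is a digital `κ`-path of length `m` in `X` from `x` to `y`. -/
def ReachIn {A : Type*} (X : Set A) (κ : A → A → Prop) (x y : A) (m : ℕ) : Prop :=
  ∃ f : ℤ → A, IsDigPath X κ m f ∧ f 0 = x ∧ f (m : ℤ) = y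

/-- `X` is `κ`-connected: every two of its points are joined by a `κ`-path in `X`. -/
def DigConnected {A : Type*} (X : Set A) (κ : A → A → Prop) : Prop :=
  ∀ x ∈ X, ∀ y ∈ X, ∃ m : ℕ, ReachIn X κ x y m

/-- The `κ`-neighborhood `N_κ(e₀, ε)` of `e₀` in `X` with radius `ε`:
points of `X` whose shortest `κ`-path distance from `e₀` is at most `ε`, together with `e₀`. -/
def Nbhd {A : Type*} (X : Set A) (κ : A → A → Prop) (e₀ : A) (ε : ℕ) : Set A :=
  {e ∈ X | ∃ m : ℕ, m ≤ ε ∧ ReachIn X κ e₀ e m} ∪ {e₀}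

/-- The restriction of `f` to `X` is a `(κ,λ)`-isomorphism onto `Y`: a `(κ,λ)`-continuous
bijection of `X` onto `Y` whose inverse is `(λ,κ)`-continuous. -/
def IsDigIsoOn {A B : Type*} (f : A → B) (X : Set A) (Y : Set B)
    (κ : A → A → Prop) (lam : B → B → Prop) : Prop :=
  MapsTo f X Y ∧ InjOn f X ∧ SurjOn f X Y ∧ DigContOn f X κ lam ∧
  ∀ x₀ ∈ X, ∀ x₁ ∈ X, lam (f x₀) (f x₁) → x₀ = x₁ ∨ κ x₀ x₁

/-- `p` is a radius-`n` digital `(κ,λ)`-covering map of `E` onto `Bs`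
(`n = 1` gives the usual digital `(κ,λ)`-covering map): a `(κ,λ)`-continuous surjection
such that for each `b ∈ Bs` there is a set `F` of points of the fiber over `b` whose radius-`n`
neighborhoods are pairwise disjoint, partition `p⁻¹(N_λ(b,n))`, and are each mapped
isomorphically onto `N_λ(b,n)` by `p`. -/
def IsRadiusCovering {A B : Type*} (p : A → B) (E : Set A) (Bs : Set B)
    (κ : A → A → Prop) (lam : B → B → Prop) (n : ℕ) : Prop :=
  MapsTo p E Bs ∧ SurjOn p E Bs ∧ DigContOn p E κ lam ∧
  ∀ b ∈ Bs, ∃ F : Set A, F ⊆ {e ∈ E | p e = b} ∧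
    (E ∩ p ⁻¹' (Nbhd Bs lam b n) = ⋃ e ∈ F, Nbhd E κ e n) ∧
    F.Pairwise (fun e e' => Disjoint (Nbhd E κ e n) (Nbhd E κ e' n)) ∧
    ∀ e ∈ F, IsDigIsoOn p (Nbhd E κ e n) (Nbhd Bs lam b n) κ lam

/-- `p` is a radius-`n` local `(κ,λ)`-isomorphism (`n = 1` gives the usual local
`(κ,λ)`-isomorphism): for every `e ∈ E` the restriction of `p` to `N_κ(e,n)` is a
`(κ,λ)`-isomorphism onto `N_λ(p e, n)`. -/
def IsLocalIso {A B : Type*} (p : A → B) (E : Set A) (Bs : Set B)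
    (κ : A → A → Prop) (lam : B → B → Prop) (n : ℕ) : Prop :=
  ∀ e ∈ E, IsDigIsoOn p (Nbhd E κ e n) (Nbhd Bs lam (p e) n) κ lam

/-- `p` has the digital path lifting property: every `λ`-path `a` in `Bs` and every point
`e ∈ E` of the fiber over `a 0` admit a lifting of `a` beginning at `e`. -/
def PathLiftingProp {A B : Type*} (p : A → B) (E : Set A) (Bs : Set B)
    (κ : A → A → Prop) (lam : B → B → Prop) : Prop :=
  ∀ (m : ℕ) (a : ℤ → B), IsDigPath Bs lam m a → ∀ e ∈ E, p e = a 0 →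
    ∃ g : ℤ → A, IsDigPath E κ m g ∧ (∀ i ∈ Icc (0 : ℤ) (m : ℤ), p (g i) = a i) ∧ g 0 = e

/-- `p` has the uniqueness of digital path lifts property: two `κ`-paths in `E` with the
same projection and the same starting point coincide (on their domain `[0,m]_ℤ`). -/
def UniqLiftsProp {A B : Type*} (p : A → B) (E : Set A) (κ : A → A → Prop) : Prop :=
  ∀ (m : ℕ) (a b : ℤ → A), IsDigPath E κ m a → IsDigPath E κ m b →
    (∀ i ∈ Icc (0 : ℤ) (m : ℤ), p (a i) = p (b i)) → a 0 = b 0 →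
    EqOn a b (Icc (0 : ℤ) (m : ℤ))

/-- `p` has the unique path lifting property (u.p.l.): both the path lifting property and
the uniqueness of path lifts property. -/
def UPL {A B : Type*} (p : A → B) (E : Set A) (Bs : Set B)
    (κ : A → A → Prop) (lam : B → B → Prop) : Prop :=
  PathLiftingProp p E Bs κ lam ∧ UniqLiftsProp p E κ

/-- `e` is a conciliator point for `p`: there are `e', e'' ∈ N_κ(e,1)` which are not
`κ`-adjacent but whose images are `λ`-adjacent. -/
def IsConciliator {A B : Type*} (p : A → B) (E : Set A)
    (κ : A → A → Prop) (lam : B → B → Prop) (e : A) : Prop :=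
  ∃ e' ∈ Nbhd E κ e 1, ∃ e'' ∈ Nbhd E κ e 1, ¬ κ e' e'' ∧ lam (p e') (p e'')

/-- `f : [0,m]_ℤ → X` is a simple `κ`-loop of length `m` in `X`: a closed `κ`-path such that
`f 0, …, f (m-1)` are pairwise distinct and `f i`, `f j` are `κ`-adjacent iff
`j = i ± 1 (mod m)`. -/
def IsSimpleLoop {A : Type*} (X : Set A) (κ : A → A → Prop) (m : ℕ) (f : ℤ → A) : Prop :=
  IsDigPath X κ m f ∧ f 0 = f (m : ℤ) ∧
  (∀ i ∈ Ico (0 : ℤ) (m : ℤ), ∀ j ∈ Ico (0 : ℤ) (m : ℤ), f i = f j → i = j) ∧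
  ∀ i ∈ Ico (0 : ℤ) (m : ℤ), ∀ j ∈ Ico (0 : ℤ) (m : ℤ),
    (κ (f i) (f j) ↔ (j % (m : ℤ) = (i + 1) % (m : ℤ) ∨ j % (m : ℤ) = (i - 1) % (m : ℤ)))

lemma adj2_iff (x y : ℤ) : adj2 x y ↔ (x - y = 1 ∨ x - y = -1) := by
  unfold adj2; rw [abs_eq (by norm_num : (0:ℤ) ≤ 1)]

lemma adj26_symm : Symmetric adj26 := by
  rintro p q ⟨h1, h2, h3, h4⟩
  exact ⟨h1.symm, by rw [abs_sub_comm]; exact h2, by rw [abs_sub_comm]; exact h3,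
    by rw [abs_sub_comm]; exact h4⟩

lemma nbhd2 (e : ℤ) (n : ℕ) : Nbhd Set.univ adj2 e n = Icc (e - n) (e + n) := by
  ext x
  simp only [Nbhd, mem_union, mem_setOf_eq, mem_singleton_iff, mem_Icc]
  constructor
  · rintro (⟨-, m, hm, f, ⟨-, hadj⟩, hf0, hfm⟩ | rfl)
    · have key : ∀ i : ℕ, i ≤ m → e - i ≤ f i ∧ f i ≤ e + i := by
        intro i
        induction i with
        | zero => intro _; simp [hf0]
        | succ i ih =>
          intro h
          have h1 := ih (by omega)
          have h2 := hadj i (by simp only [mem_Icc]; omega)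
            (i + 1) (by simp only [mem_Icc]; omega)
            (by rw [adj2_iff]; omega)
          rw [adj2_iff] at h2
          push_cast at h1 h2 ⊢
          omega
      have := key m le_rfl
      omega
    · omega
  · intro hx
    left
    refine ⟨trivial, (x - e).natAbs, by omega,
      fun i => e + max (min i (x - e)) (-i), ⟨fun _ _ => trivial, ?_⟩, ?_, ?_⟩
    · intro i hi j hj hij
      rw [adj2_iff] at hij
      simp only [adj2_iff, min_def, max_def]
      split_ifs <;> omega
    · simp only [min_def, max_def]; split_ifs <;> omega
    · simp only [min_def, max_def]; split_ifs <;> omega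

lemma nbhd_one {A : Type*} {X : Set A} {κ : A → A → Prop} (hs : Symmetric κ) {e : A}
    (he : e ∈ X) : Nbhd X κ e 1 = {x ∈ X | x = e ∨ κ e x} := by
  ext x
  simp only [Nbhd, mem_union, mem_setOf_eq, mem_singleton_iff]
  constructor
  · rintro (⟨hxX, m, hm, f, ⟨hfX, hadj⟩, hf0, hfm⟩ | rfl)
    · interval_cases m
      · norm_num at hfm
        exact ⟨hxX, Or.inl (by rw [← hfm, hf0])⟩
      · norm_num at hfm
        have h2 := hadj 0 (by norm_num) 1 (by norm_num) (by rw [adj2_iff]; omega)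
        rw [hf0, hfm] at h2
        exact ⟨hxX, h2.imp Eq.symm id⟩
    · exact ⟨he, Or.inl rfl⟩
  · rintro ⟨hxX, (rfl | hκ)⟩
    · exact Or.inr rfl
    · left
      refine ⟨hxX, 1, le_rfl, fun i => if i ≤ 0 then e else x, ⟨?_, ?_⟩, by norm_num,
        by norm_num⟩
      · intro i hi; dsimp only; split_ifs <;> assumption
      · intro i hi j hj hij
        simp only [mem_Icc] at hi hj
        rw [adj2_iff] at hij
        norm_num at hi hj
        have hc : (i = 0 ∧ j = 1) ∨ (i = 1 ∧ j = 0) := by omega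
        rcases hc with ⟨rfl, rfl⟩ | ⟨rfl, rfl⟩
        · right; norm_num; exact hκ
        · right; norm_num; exact hs hκ

lemma adjq (a : ℤ → ℤ × ℤ × ℤ) (ha : IsSimpleLoop Set.univ adj26 5 a) (i j : ℤ) :
    adj26 (a (i % 5)) (a (j % 5)) ↔ (j % 5 = (i + 1) % 5 ∨ j % 5 = (i - 1) % 5) := by
  have h := ha.2.2.2 (i % 5) (by simp only [mem_Ico]; push_cast; omega)
    (j % 5) (by simp only [mem_Ico]; push_cast; omega)
  push_cast at h
  constructor
  · intro hadj
    have := h.mp hadj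
    omega
  · intro hmod
    exact h.mpr (by omega)

lemma injq (a : ℤ → ℤ × ℤ × ℤ) (ha : IsSimpleLoop Set.univ adj26 5 a) (i j : ℤ)
    (h : a (i % 5) = a (j % 5)) : i % 5 = j % 5 := by
  have := ha.2.2.1 (i % 5) (by simp only [mem_Ico]; push_cast; omega)
    (j % 5) (by simp only [mem_Ico]; push_cast; omega) h
  exact this

lemma nbhdB (a : ℤ → ℤ × ℤ × ℤ) (ha : IsSimpleLoop Set.univ adj26 5 a) (c : ℤ) :
    Nbhd (a '' Icc (0:ℤ) 4) adj26 (a (c % 5)) 1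
      = (fun i => a (i % 5)) '' Icc (c - 1) (c + 1) := by
  rw [nbhd_one adj26_symm (⟨c % 5, by simp only [mem_Icc]; omega, rfl⟩ :
    a (c % 5) ∈ a '' Icc (0:ℤ) 4)]
  ext x
  simp only [mem_setOf_eq, mem_image, mem_Icc]
  constructor
  · rintro ⟨⟨t, ht, rfl⟩, h⟩
    have hteq : t % 5 = t := by omega
    rcases h with heq | hadj
    · exact ⟨c, by omega, heq.symm⟩
    · have h' := (adjq a ha c t).mp (by rw [hteq]; exact hadj)
      rcases h' with h' | h'
      · exact ⟨c + 1, by omega, congrArg a (by omega)⟩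
      · exact ⟨c - 1, by omega, congrArg a (by omega)⟩
  · rintro ⟨j, hj, rfl⟩
    refine ⟨⟨j % 5, by omega, rfl⟩, ?_⟩
    rcases (by omega : j = c - 1 ∨ j = c ∨ j = c + 1) with rfl | rfl | rfl
    · exact Or.inr ((adjq a ha c (c - 1)).mpr (Or.inr rfl))
    · exact Or.inl rfl
    · exact Or.inr ((adjq a ha c (c + 1)).mpr (Or.inl rfl))

/-- Example 4.6: for a simple 26-loop `a : [0,5]_ℤ → ℤ³`, `B = {a 0, …, a 4}` with
26-adjacency and `p : ℤ → B` given by `p i = a (i mod 5)`, the map `p` is a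
`(2,26)`-covering map but not a radius 2 local isomorphism. -/
theorem example_4_6 (a : ℤ → ℤ × ℤ × ℤ) (ha : IsSimpleLoop Set.univ adj26 5 a)
    (p : ℤ → ℤ × ℤ × ℤ) (hp : ∀ i : ℤ, p i = a (i % 5)) :
    IsRadiusCovering p Set.univ (a '' Set.Icc (0 : ℤ) 4) adj2 adj26 1 ∧
    ¬ IsLocalIso p Set.univ (a '' Set.Icc (0 : ℤ) 4) adj2 adj26 2 := by
  constructor
  · refine ⟨?_, ?_, ?_, ?_⟩
    · intro i _
      exact ⟨i % 5, by simp only [mem_Icc]; omega, (hp i).symm⟩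
    · rintro x ⟨t, ht, rfl⟩
      simp only [mem_Icc] at ht
      exact ⟨t, trivial, by rw [hp]; exact congrArg a (by omega)⟩
    · intro x _ y _ hxy
      rw [adj2_iff] at hxy
      right
      rw [hp, hp]
      exact (adjq a ha x y).mpr (by omega)
    · rintro b ⟨k, hk, rfl⟩
      simp only [mem_Icc] at hk
      have hak : a k = a (k % 5) := congrArg a (by omega)
      refine ⟨{e : ℤ | e % 5 = k}, ?_, ?_, ?_, ?_⟩
      · intro e he
        exact ⟨trivial, by rw [hp]; exact congrArg a he⟩
      · rw [hak, nbhdB a ha k]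
        ext i
        simp only [mem_inter_iff, mem_preimage, mem_univ, true_and, mem_iUnion,
          mem_setOf_eq, nbhd2, mem_Icc, mem_image, Nat.cast_one]
        constructor
        · rintro ⟨c, ⟨hc1, hc2⟩, hci⟩
          rw [hp] at hci
          have := injq a ha c i hci
          exact ⟨i + k - c, by omega, by omega, by omega⟩
        · rintro ⟨e, he, hi1, hi2⟩
          refine ⟨k + (i - e), ⟨by omega, by omega⟩, ?_⟩
          rw [hp]
          exact congrArg a (by omega)
      · intro e he e' he' hne
        simp only [mem_setOf_eq] at he he'
        rw [nbhd2, nbhd2, Set.disjoint_left]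
        intro x hx hx'
        simp only [mem_Icc, Nat.cast_one] at hx hx'
        omega
      · intro e he
        simp only [mem_setOf_eq] at he
        rw [nbhd2, hak, nbhdB a ha k]
        have hcast : Icc (e - ((1:ℕ):ℤ)) (e + ((1:ℕ):ℤ)) = Icc (e - 1) (e + 1) := by
          norm_num
        rw [hcast]
        refine ⟨?_, ?_, ?_, ?_, ?_⟩
        · intro x hx
          simp only [mem_Icc] at hx
          refine ⟨x + k - e, by simp only [mem_Icc]; omega, ?_⟩
          rw [hp]
          exact congrArg a (by omega)
        · intro x hx y hy hxy
          rw [hp, hp] at hxy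
          have := injq a ha x y hxy
          simp only [mem_Icc] at hx hy
          omega
        · rintro z ⟨j, hj, rfl⟩
          simp only [mem_Icc] at hj
          refine ⟨e + (j - k), by simp only [mem_Icc]; omega, ?_⟩
          rw [hp]
          exact congrArg a (by omega)
        · intro x _ y _ hxy
          rw [adj2_iff] at hxy
          right
          rw [hp, hp]
          exact (adjq a ha x y).mpr (by omega)
        · intro x hx y hy hxy
          rw [hp, hp] at hxy
          have := (adjq a ha x y).mp hxy
          simp only [mem_Icc] at hx hy
          right
          rw [adj2_iff]
          omega
  · intro h
    obtain ⟨-, -, -, -, hrev⟩ := h 0 trivial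
    have h2 : (2:ℤ) ∈ Nbhd Set.univ adj2 0 2 := by
      rw [nbhd2]; simp only [mem_Icc]; omega
    have hm2 : (-2:ℤ) ∈ Nbhd Set.univ adj2 0 2 := by
      rw [nbhd2]; simp only [mem_Icc]; omega
    have hadj : adj26 (p 2) (p (-2)) := by
      rw [hp, hp]
      exact (adjq a ha 2 (-2)).mpr (by omega)
    rcases hrev 2 h2 (-2) hm2 hadj with h' | h'
    · exact absurd h' (by norm_num)
    · rw [adj2_iff] at h'
      omega
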